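/- For the one-dimensional RW with geometric absorption, the absorption probabilities P_n = (1 − α)·X_n satisfy Σ_{n∈ℤ} P_n = 1, where X_n = C·ξ₁^n for n ≤ 0 and X_n = C·ξ₂^n for n ≥ 0. -/

import Mathlib

theorem total_absorption_probability_one (p q α : ℝ) (hp : 0 < p) (hq : 0 < q)
    (hpq : p + q = 1) (hα0 : 0 < α) (hα1 : α < 1)
    (C ξ₁ ξ₂ : ℝ)
    (hC : C = (1 - 4 * p * q * α ^ 2) ^ (-(1:ℝ)/2))
    (hξ₁ : ξ₁ = (1 + Real.sqrt (1 - 4 * p * q * α ^ 2)) / (2 * q * α))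
    (hξ₂ : ξ₂ = (1 - Real.sqrt (1 - 4 * p * q * α ^ 2)) / (2 * q * α))
    (X : ℤ → ℝ)
    (hX : ∀ n : ℤ, X n = if n ≤ 0 then C * ξ₁ ^ n else C * ξ₂ ^ n) :
    ∑' n : ℤ, (1 - α) * X n = 1 := by
  have h4pq : 4 * p * q ≤ 1 := by nlinarith [sq_nonneg (p - q)]
  have hα2 : α ^ 2 < 1 := by nlinarith
  have hD : 0 < 1 - 4 * p * q * α ^ 2 := by nlinarith [mul_pos hp hq, sq_nonneg α]
  set s := Real.sqrt (1 - 4 * p * q * α ^ 2) with hs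
  have hs0 : 0 < s := Real.sqrt_pos.mpr hD
  have hs2 : s ^ 2 = 1 - 4 * p * q * α ^ 2 := Real.sq_sqrt hD.le
  have hs1 : s < 1 := by nlinarith [mul_pos (mul_pos hp hq) (mul_pos hα0 hα0)]
  have hqα : 0 < 2 * q * α := by positivity
  have hC' : C = s⁻¹ := by
    rw [hC, hs, Real.sqrt_eq_rpow, ← Real.rpow_neg hD.le]
    norm_num
  have hξ₂0 : 0 < ξ₂ := by rw [hξ₂]; exact div_pos (by linarith) hqα
  have hkey : s > 1 - 2 * q * α ∧ s > 2 * q * α - 1 := by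
    constructor <;>
      nlinarith [mul_pos (mul_pos hq hα0) (sub_pos.mpr hα1), sq_nonneg (s - 1 + 2*q*α),
        sq_nonneg (s + 1 - 2*q*α)]
  have hξ₂1 : ξ₂ < 1 := by rw [hξ₂, div_lt_one hqα]; linarith [hkey.1]
  have hξ₁1 : 1 < ξ₁ := by rw [hξ₁, lt_div_iff₀ hqα]; linarith [hkey.2]
  have hξ₁0 : 0 < ξ₁ := by linarith
  have hinv0 : 0 ≤ ξ₁⁻¹ := by positivity
  have hinv1 : ξ₁⁻¹ < 1 := by rw [inv_lt_one_iff₀]; right; exact hξ₁1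
  have hXpos : ∀ n : ℕ, (1 - α) * X n = (1 - α) * C * ξ₂ ^ n := by
    intro n
    rw [hX]
    rcases Nat.eq_zero_or_pos n with h | h
    · subst h; simp
    · rw [if_neg (by exact_mod_cast (by omega : ¬ (n : ℤ) ≤ 0))]
      rw [zpow_natCast]; ring
  have hXneg : ∀ n : ℕ, (1 - α) * X (-(n + 1)) = ((1 - α) * C * ξ₁⁻¹) * (ξ₁⁻¹) ^ n := by
    intro n
    rw [hX, if_pos (by omega)]
    rw [show -((n : ℤ) + 1) = -((n + 1 : ℕ) : ℤ) by push_cast; ring]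
    rw [zpow_neg, zpow_natCast, ← inv_pow, pow_succ']
    ring
  have h1 : HasSum (fun n : ℕ => (1 - α) * X n) ((1 - α) * C * (1 - ξ₂)⁻¹) := by
    have hg := (hasSum_geometric_of_lt_one hξ₂0.le hξ₂1).mul_left ((1 - α) * C)
    simp only [hXpos]
    exact hg
  have h2 : HasSum (fun n : ℕ => (1 - α) * X (-(n + 1))) ((1 - α) * C * ξ₁⁻¹ * (1 - ξ₁⁻¹)⁻¹) := by
    have hg := (hasSum_geometric_of_lt_one hinv0 hinv1).mul_left ((1 - α) * C * ξ₁⁻¹)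
    simp only [hXneg]
    exact hg
  have htot := HasSum.of_nat_of_neg_add_one (f := fun n : ℤ => (1 - α) * X n) h1 h2
  rw [htot.tsum_eq]
  have hne1 : (1 : ℝ) - ξ₂ ≠ 0 := by intro h; linarith
  have hne2 : ξ₁ - 1 ≠ 0 := by intro h; linarith
  have hne3 : (1 : ℝ) - ξ₁⁻¹ ≠ 0 := by intro h; linarith
  have hinv : ξ₁⁻¹ * (1 - ξ₁⁻¹)⁻¹ = (ξ₁ - 1)⁻¹ := by
    rw [eq_comm, inv_eq_iff_eq_inv]
    field_simp
  have hd : (1 - ξ₂) * (ξ₁ - 1) = (1 - α) / (q * α) := by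
    rw [hξ₁, hξ₂]
    field_simp
    linear_combination hs2 - 4 * q * α ^ 2 * hpq
  have hn : ξ₁ - ξ₂ = s / (q * α) := by
    rw [hξ₁, hξ₂]
    field_simp
    ring
  have hsplit : (1 - ξ₂)⁻¹ + (ξ₁ - 1)⁻¹ = (ξ₁ - ξ₂) / ((1 - ξ₂) * (ξ₁ - 1)) := by
    field_simp
    ring
  have hα' : (1 : ℝ) - α ≠ 0 := by intro h; linarith
  calc (1 - α) * C * (1 - ξ₂)⁻¹ + (1 - α) * C * ξ₁⁻¹ * (1 - ξ₁⁻¹)⁻¹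
      = (1 - α) * C * ((1 - ξ₂)⁻¹ + (ξ₁ - 1)⁻¹) := by rw [mul_assoc ((1-α)*C) ξ₁⁻¹, hinv]; ring
    _ = (1 - α) * s⁻¹ * ((s / (q * α)) / ((1 - α) / (q * α))) := by
        rw [hC', hsplit, hn, hd]
    _ = 1 := by field_simp
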